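/- arXiv:2310.16213 — 2 statements merged into one kernel-verified Lean document; each statement's English description precedes it below -/
import Mathlib

section
/- (Deterministic form of Lemma 2.10, null case.) Fix f ≥ 0, k > 0, r ≥ 1, β > 0, δ > 0, c₀ > 0, and set m_n = δn − c₀ and τ_n² = βn. Then lim_{n→∞} n^{k/2+r} · BF₁₀(f | τ_n², r; k, m_n) = β^{−(k/2+r)} · ₁F₁(k/2+r, k/2; kf/2), where BF₁₀(f|τ²,r;k,m) denotes the F Bayes factor with (k,m) degrees of freedom. In particular BF₁₀(f|τ_n²,r;k,m_n) = O(n^{−(k/2+r)}). -/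
open Real MeasureTheory Filter Asymptotics

/-- Rising factorial (Pochhammer symbol) `(a)_k`. -/
noncomputable def risingFac (a : ℝ) (k : ℕ) : ℝ := (ascPochhammer ℝ k).eval a

/-- Confluent hypergeometric function `₁F₁(a, b; x)`. -/
noncomputable def oneF1 (a b x : ℝ) : ℝ :=
  ∑' k : ℕ, (risingFac a k / risingFac b k) * x ^ k / (Nat.factorial k : ℝ)

/-- Gaussian hypergeometric function `₂F₁(a, b, c; x)` (as a series). -/
noncomputable def twoF1 (a b c x : ℝ) : ℝ :=
  ∑' k : ℕ, (risingFac a k * risingFac b k / (risingFac c k * (Nat.factorial k : ℝ))) * x ^ k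

/-- `F` Bayes factor `BF₁₀(f | τ², r; k, m)` with `(k, m)` degrees of freedom,
as a function of `τ² = τsq`. -/
noncomputable def BF10F (f τsq r k m : ℝ) : ℝ :=
  (1 + τsq) ^ (-(k / 2 + r)) *
    twoF1 (k / 2 + r) ((k + m) / 2) (k / 2) (k * f * τsq / ((1 + τsq) * (m + k * f)))

lemma risingFac_zero (a : ℝ) : risingFac a 0 = 1 := by simp [risingFac]

lemma risingFac_succ (a : ℝ) (j : ℕ) : risingFac a (j+1) = risingFac a j * (a + j) := by
  simp [risingFac, ascPochhammer_succ_eval]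

lemma risingFac_pos {a : ℝ} (ha : 0 < a) : ∀ j, 0 < risingFac a j := by
  intro j
  induction j with
  | zero => simp [risingFac_zero]
  | succ j ih => rw [risingFac_succ]; positivity

lemma risingFac_nonneg {a : ℝ} (ha : 0 ≤ a) (j : ℕ) : 0 ≤ risingFac a j := by
  induction j with
  | zero => simp [risingFac_zero]
  | succ j ih => rw [risingFac_succ]; positivity

lemma rf_bound {b x M : ℝ} (hb : 0 ≤ b) (hx : 0 ≤ x) (hx2 : x ≤ 1/2) (hbx : b * x ≤ M)
    (hM : 1 ≤ M) : ∀ j, risingFac b j * x ^ j ≤ (1/2)^j * risingFac (2*M) j := by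
  have hM0 : (0:ℝ) ≤ 2*M := by linarith
  intro j
  induction j with
  | zero => simp [risingFac_zero]
  | succ j ih =>
    have h1 : risingFac b (j+1) * x^(j+1) = (risingFac b j * x^j) * ((b + j) * x) := by
      rw [risingFac_succ, pow_succ]; ring
    have h2 : (1/2:ℝ)^(j+1) * risingFac (2*M) (j+1)
        = ((1/2)^j * risingFac (2*M) j) * ((2*M + j)/2) := by
      rw [risingFac_succ, pow_succ]; ring
    rw [h1, h2]
    have hjx : (j:ℝ) * x ≤ (j:ℝ) * (1/2) :=
      mul_le_mul_of_nonneg_left hx2 (Nat.cast_nonneg j)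
    have h3 : (b + j) * x ≤ (2*M + j)/2 := by
      have : (b+j)*x = b*x + j*x := by ring
      rw [this]; linarith
    have h4 : 0 ≤ risingFac b j * x ^ j := by
      have := risingFac_nonneg hb j; positivity
    have h5 : 0 ≤ (b + j) * x := by positivity
    exact mul_le_mul ih h3 h5 (by have := risingFac_nonneg hM0 j; positivity)

lemma rf_tendsto {b x : ℕ → ℝ} {L : ℝ} (hbx : Tendsto (fun n => b n * x n) atTop (nhds L))
    (hx : Tendsto x atTop (nhds 0)) (j : ℕ) :
    Tendsto (fun n => risingFac (b n) j * x n ^ j) atTop (nhds (L ^ j)) := by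
  induction j with
  | zero => simpa [risingFac_zero] using tendsto_const_nhds
  | succ j ih =>
    have heq : (fun n => risingFac (b n) (j+1) * x n ^ (j+1))
        = fun n => (risingFac (b n) j * x n ^ j) * (b n * x n + (j:ℝ) * x n) := by
      funext n; rw [risingFac_succ, pow_succ]; ring
    rw [heq]
    have h2 : Tendsto (fun n => b n * x n + (j:ℝ) * x n) atTop (nhds L) := by
      have := hbx.add ((hx.const_mul (j:ℝ)))
      simpa using this
    simpa [pow_succ] using ih.mul h2

lemma aux_summable {A c M : ℝ} (hA : 0 < A) (hc : 0 < c) (hM : 1 ≤ M) :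
    Summable (fun j : ℕ => (risingFac A j / (risingFac c j * (Nat.factorial j : ℝ)))
      * ((1/2)^j * risingFac (2*M) j)) := by
  set g : ℕ → ℝ := fun j => (risingFac A j / (risingFac c j * (Nat.factorial j : ℝ)))
      * ((1/2)^j * risingFac (2*M) j) with hg
  have hM0 : (0:ℝ) < 2*M := by linarith
  have hgpos : ∀ j, 0 < g j := by
    intro j
    have h1 := risingFac_pos hA j
    have h2 := risingFac_pos hc j
    have h3 := risingFac_pos hM0 j
    have h4 : (0:ℝ) < Nat.factorial j := by positivity
    rw [hg]; positivity
  apply summable_of_ratio_norm_eventually_le (r := 3/4) (by norm_num)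
  filter_upwards [eventually_ge_atTop (⌈2*A + 4*M + 2*A*M⌉₊)] with j hj
  have hjR : 2*A + 4*M + 2*A*M ≤ (j:ℝ) := by
    calc 2*A + 4*M + 2*A*M ≤ (⌈2*A + 4*M + 2*A*M⌉₊ : ℝ) := Nat.le_ceil _
    _ ≤ (j:ℝ) := Nat.cast_le.mpr hj
  have key : g (j+1) = g j * ((A + j) * (2*M + j) / (2*(c + j)*(j+1))) := by
    have h2 := (risingFac_pos hc j).ne'
    have h4 : ((Nat.factorial j : ℝ)) ≠ 0 := by positivity
    have h5 : (c + j) ≠ 0 := by positivity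
    have h6 : ((j:ℝ)+1) ≠ 0 := by positivity
    rw [hg]
    simp only [risingFac_succ, pow_succ, Nat.factorial_succ, Nat.cast_mul, Nat.cast_add,
      Nat.cast_one]
    field_simp
  have hratio : (A + j) * (2*M + j) / (2*(c + j)*(j+1)) ≤ 3/4 := by
    rw [div_le_iff₀ (by positivity)]
    have hj4 : (4:ℝ) ≤ (j:ℝ) := by nlinarith
    nlinarith [mul_nonneg (sub_nonneg.mpr hjR) (Nat.cast_nonneg (α := ℝ) j),
      mul_pos hA hM0, mul_nonneg (mul_pos hA hM0).le (sub_nonneg.mpr hj4),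
      Nat.cast_nonneg (α := ℝ) j]
  rw [Real.norm_eq_abs, Real.norm_eq_abs, abs_of_pos (hgpos _), abs_of_pos (hgpos _), key]
  calc g j * ((A + j) * (2*M + j) / (2*(c + j)*(j+1))) ≤ g j * (3/4) :=
        mul_le_mul_of_nonneg_left hratio (le_of_lt (hgpos j))
  _ = 3/4 * g j := by ring

/-- Deterministic form of Lemma 2.10, null case. -/
theorem lemma210_null (f k r β δ c₀ : ℝ) (hf : 0 ≤ f) (hk : 0 < k) (hr : 1 ≤ r)
    (hβ : 0 < β) (hδ : 0 < δ) (hc₀ : 0 < c₀) :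
    Tendsto (fun n : ℕ => (n : ℝ) ^ (k / 2 + r) * BF10F f (β * n) r k (δ * n - c₀)) atTop
      (nhds (β ^ (-(k / 2 + r)) * oneF1 (k / 2 + r) (k / 2) (k * f / 2))) ∧
    (fun n : ℕ => BF10F f (β * n) r k (δ * n - c₀)) =O[atTop]
      fun n : ℕ => (n : ℝ) ^ (-(k / 2 + r)) := by
  set A : ℝ := k/2 + r with hAdef
  set c : ℝ := k/2 with hcdef
  set M : ℝ := k*f/2 + 1 with hMdef
  have hA : 0 < A := by rw [hAdef]; nlinarith
  have hc : 0 < c := by rw [hcdef]; positivity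
  have hM : 1 ≤ M := by rw [hMdef]; nlinarith
  set x : ℕ → ℝ := fun n => k*f*(β*n) / ((1+β*n)*((δ*n-c₀)+k*f)) with hxdef
  set b : ℕ → ℝ := fun n => (k + (δ*n-c₀))/2 with hbdef
  have hu : Tendsto (fun n : ℕ => ((n:ℝ))⁻¹) atTop (nhds 0) :=
    tendsto_inv_atTop_zero.comp tendsto_natCast_atTop_atTop
  have hδn : Tendsto (fun n : ℕ => δ*(n:ℝ) - c₀) atTop atTop := by
    have h0 : Tendsto (fun n : ℕ => δ*(n:ℝ)) atTop atTop :=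
      Tendsto.const_mul_atTop hδ tendsto_natCast_atTop_atTop
    simpa [sub_eq_add_neg] using tendsto_atTop_add_const_right atTop (-c₀) h0
  have hev : ∀ᶠ n : ℕ in atTop, 1 ≤ δ*(n:ℝ) - c₀ ∧ 1 ≤ n := by
    filter_upwards [hδn.eventually_ge_atTop 1, eventually_ge_atTop 1] with n h1 h2
    exact ⟨h1, h2⟩
  have hfacts : ∀ n : ℕ, 1 ≤ δ*(n:ℝ) - c₀ → 1 ≤ n →
      (0:ℝ) < n ∧ 0 < 1 + β*(n:ℝ) ∧ 0 < (δ*(n:ℝ)-c₀) + k*f := by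
    intro n h1 h2
    have hn : (0:ℝ) < n := by exact_mod_cast h2
    refine ⟨hn, by positivity, by nlinarith⟩
  -- x n → 0
  have hx0 : Tendsto x atTop (nhds 0) := by
    have hX : Tendsto (fun n : ℕ => k*f*β*((n:ℝ))⁻¹ /
        ((((n:ℝ))⁻¹+β)*(δ+(k*f-c₀)*((n:ℝ))⁻¹))) atTop (nhds 0) := by
      have h1 : Tendsto (fun n : ℕ => k*f*β*((n:ℝ))⁻¹) atTop (nhds (k*f*β*0)) :=
        hu.const_mul _
      have h2 : Tendsto (fun n : ℕ => (((n:ℝ))⁻¹+β)*(δ+(k*f-c₀)*((n:ℝ))⁻¹)) atTop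
          (nhds ((0+β)*(δ+(k*f-c₀)*0))) :=
        ((hu.add_const β).mul ((hu.const_mul _).const_add δ))
      have h3 : ((0:ℝ)+β)*(δ+(k*f-c₀)*0) ≠ 0 := by
        have : ((0:ℝ)+β)*(δ+(k*f-c₀)*0) = β*δ := by ring
        rw [this]; positivity
      have := h1.div h2 h3
      rw [show k*f*β*0 / ((0+β)*(δ+(k*f-c₀)*0)) = (0:ℝ) by ring] at this
      exact this
    apply hX.congr'
    filter_upwards [hev] with n ⟨h1, h2⟩
    obtain ⟨hn, hd1, hd2⟩ := hfacts n h1 h2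
    have hn' : (n:ℝ) ≠ 0 := hn.ne'
    have hd3 : 0 < δ+(k*f-c₀)*((n:ℝ))⁻¹ := by
      have h5 : δ+(k*f-c₀)*((n:ℝ))⁻¹ = ((δ*(n:ℝ)-c₀)+k*f) * ((n:ℝ))⁻¹ := by
        field_simp; ring
      rw [h5]; positivity
    have hD2 : 0 < (((n:ℝ))⁻¹+β)*(δ+(k*f-c₀)*((n:ℝ))⁻¹) := by positivity
    symm
    rw [hxdef]
    show k*f*(β*(n:ℝ)) / ((1+β*(n:ℝ))*((δ*(n:ℝ)-c₀)+k*f)) = _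
    rw [div_eq_div_iff (by positivity) hD2.ne']
    field_simp
    ring
  -- b n * x n → k f / 2
  have hbx : Tendsto (fun n => b n * x n) atTop (nhds (k*f/2)) := by
    have hX : Tendsto (fun n : ℕ => k*f*β*(δ+(k-c₀)*((n:ℝ))⁻¹) /
        (2*((((n:ℝ))⁻¹+β)*(δ+(k*f-c₀)*((n:ℝ))⁻¹)))) atTop (nhds (k*f/2)) := by
      have h1 : Tendsto (fun n : ℕ => k*f*β*(δ+(k-c₀)*((n:ℝ))⁻¹)) atTop
          (nhds (k*f*β*(δ+(k-c₀)*0))) := ((hu.const_mul _).const_add δ).const_mul _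
      have h2 : Tendsto (fun n : ℕ => 2*((((n:ℝ))⁻¹+β)*(δ+(k*f-c₀)*((n:ℝ))⁻¹))) atTop
          (nhds (2*((0+β)*(δ+(k*f-c₀)*0)))) :=
        (((hu.add_const β).mul ((hu.const_mul _).const_add δ))).const_mul 2
      have h3 : 2*(((0:ℝ)+β)*(δ+(k*f-c₀)*0)) ≠ 0 := by
        have : 2*(((0:ℝ)+β)*(δ+(k*f-c₀)*0)) = 2*(β*δ) := by ring
        rw [this]; positivity
      have h4 := h1.div h2 h3
      have : k*f*β*(δ+(k-c₀)*0) / (2*((0+β)*(δ+(k*f-c₀)*0))) = k*f/2 := by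
        rw [mul_zero, add_zero, zero_add, mul_zero, add_zero]
        field_simp
      rwa [this] at h4
    apply hX.congr'
    filter_upwards [hev] with n ⟨h1, h2⟩
    obtain ⟨hn, hd1, hd2⟩ := hfacts n h1 h2
    have hn' : (n:ℝ) ≠ 0 := hn.ne'
    have hd3 : 0 < δ+(k*f-c₀)*((n:ℝ))⁻¹ := by
      have h5 : δ+(k*f-c₀)*((n:ℝ))⁻¹ = ((δ*(n:ℝ)-c₀)+k*f) * ((n:ℝ))⁻¹ := by
        field_simp; ring
      rw [h5]; positivity
    have hD2 : 0 < 2*((((n:ℝ))⁻¹+β)*(δ+(k*f-c₀)*((n:ℝ))⁻¹)) := by positivity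
    symm
    rw [hxdef, hbdef]
    show (k + (δ*(n:ℝ)-c₀))/2 * (k*f*(β*(n:ℝ)) / ((1+β*(n:ℝ))*((δ*(n:ℝ)-c₀)+k*f))) = _
    rw [div_mul_div_comm, div_eq_div_iff (by positivity) hD2.ne']
    field_simp
    ring
  -- the series limit
  have hS : Tendsto (fun n => twoF1 A (b n) c (x n)) atTop
      (nhds (oneF1 A c (k*f/2))) := by
    have hone : oneF1 A c (k*f/2)
        = ∑' j : ℕ, (risingFac A j / (risingFac c j * (Nat.factorial j : ℝ))) * (k*f/2)^j := by
      rw [oneF1]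
      apply tsum_congr
      intro j
      ring
    rw [hone]
    have hmain : Tendsto (fun n => ∑' j : ℕ,
        (risingFac A j * risingFac (b n) j / (risingFac c j * (Nat.factorial j : ℝ)))
          * (x n)^j) atTop (nhds (∑' j : ℕ,
        (risingFac A j / (risingFac c j * (Nat.factorial j : ℝ))) * (k*f/2)^j)) := by
      apply tendsto_tsum_of_dominated_convergence
        (bound := fun j : ℕ => (risingFac A j / (risingFac c j * (Nat.factorial j : ℝ)))
          * ((1/2)^j * risingFac (2*M) j))
      · exact aux_summable hA hc hM
      · intro j
        have h1 := (rf_tendsto hbx hx0 j).const_mul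
          (risingFac A j / (risingFac c j * (Nat.factorial j : ℝ)))
        apply h1.congr
        intro n
        ring
      · have hxle : ∀ᶠ n : ℕ in atTop, x n ≤ 1/2 :=
          hx0.eventually (eventually_le_nhds (by norm_num))
        have hbxle : ∀ᶠ n : ℕ in atTop, b n * x n ≤ M :=
          hbx.eventually (eventually_le_nhds (by rw [hMdef]; linarith))
        filter_upwards [hev, hxle, hbxle] with n ⟨h1, h2⟩ h3 h4
        intro j
        obtain ⟨hn, hd1, hd2⟩ := hfacts n h1 h2
        have hxnn : 0 ≤ x n := by
          rw [hxdef]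
          exact div_nonneg (by positivity) (le_of_lt (mul_pos hd1 hd2))
        have hbnn : 0 ≤ b n := by rw [hbdef]; simp only; linarith
        have hra := risingFac_pos hA j
        have hrc := risingFac_pos hc j
        have hrb := risingFac_nonneg hbnn j
        have hfac : (0:ℝ) < Nat.factorial j := by positivity
        have hterm : 0 ≤ risingFac A j * risingFac (b n) j /
            (risingFac c j * (Nat.factorial j : ℝ)) * x n ^ j := by positivity
        rw [Real.norm_eq_abs, abs_of_nonneg hterm]
        have hkey : risingFac (b n) j * x n ^ j ≤ (1/2)^j * risingFac (2*M) j :=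
          rf_bound hbnn hxnn h3 h4 hM j
        calc risingFac A j * risingFac (b n) j /
              (risingFac c j * (Nat.factorial j : ℝ)) * x n ^ j
            = (risingFac A j / (risingFac c j * (Nat.factorial j : ℝ)))
              * (risingFac (b n) j * x n ^ j) := by ring
          _ ≤ (risingFac A j / (risingFac c j * (Nat.factorial j : ℝ)))
              * ((1/2)^j * risingFac (2*M) j) :=
              mul_le_mul_of_nonneg_left hkey (by positivity)
    exact hmain.congr (fun n => rfl)
  -- prefactor
  have hP : Tendsto (fun n : ℕ => (n:ℝ)^A * (1+β*(n:ℝ))^(-A)) atTop (nhds (β^(-A))) := by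
    have hfrac : Tendsto (fun n : ℕ => (n:ℝ)/(1+β*(n:ℝ))) atTop (nhds β⁻¹) := by
      have h1 : Tendsto (fun n : ℕ => (((n:ℝ))⁻¹+β)⁻¹) atTop (nhds ((0+β)⁻¹)) :=
        (hu.add_const β).inv₀ (by positivity)
      rw [zero_add] at h1
      apply h1.congr'
      filter_upwards [eventually_ge_atTop 1] with n h2
      have hn : (0:ℝ) < n := by exact_mod_cast h2
      have hn' : (n:ℝ) ≠ 0 := hn.ne'
      have hden : (0:ℝ) < 1+β*(n:ℝ) := by positivity
      rw [eq_div_iff hden.ne']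
      field_simp
    have h2 := hfrac.rpow_const (Or.inr hA.le)
    have h3 : (β⁻¹)^A = β^(-A) := by
      rw [Real.rpow_neg hβ.le, ← Real.inv_rpow hβ.le]
    rw [h3] at h2
    apply h2.congr'
    filter_upwards [eventually_ge_atTop 1] with n h4
    have hn : (0:ℝ) < n := by exact_mod_cast h4
    have hden : (0:ℝ) < 1+β*(n:ℝ) := by positivity
    rw [Real.div_rpow hn.le hden.le, Real.rpow_neg hden.le, div_eq_mul_inv]
  -- first conjunct
  have hfirst : Tendsto (fun n : ℕ => (n : ℝ) ^ (k / 2 + r) *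
      BF10F f (β * n) r k (δ * n - c₀)) atTop
      (nhds (β ^ (-(k / 2 + r)) * oneF1 (k / 2 + r) (k / 2) (k * f / 2))) := by
    have := hP.mul hS
    apply this.congr
    intro n
    simp only [BF10F]
    rw [hxdef, hbdef, hAdef, hcdef]
    ring
  refine ⟨hfirst, ?_⟩
  -- second conjunct
  have hO1 : (fun n : ℕ => (n : ℝ) ^ A * BF10F f (β * n) r k (δ * n - c₀))
      =O[atTop] (fun _ : ℕ => (1:ℝ)) := hfirst.isBigO_one ℝ
  have hO2 : (fun n : ℕ => (n:ℝ)^(-A) * ((n : ℝ) ^ A * BF10F f (β * n) r k (δ * n - c₀)))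
      =O[atTop] (fun n : ℕ => (n:ℝ)^(-A) * 1) :=
    (isBigO_refl (fun n : ℕ => (n:ℝ)^(-A)) atTop).mul hO1
  have heq : (fun n : ℕ => BF10F f (β * n) r k (δ * n - c₀)) =ᶠ[atTop]
      (fun n : ℕ => (n:ℝ)^(-A) * ((n : ℝ) ^ A * BF10F f (β * n) r k (δ * n - c₀))) := by
    filter_upwards [eventually_ge_atTop 1] with n h4
    have hn : (0:ℝ) < n := by exact_mod_cast h4
    rw [← mul_assoc, Real.rpow_neg hn.le, inv_mul_cancel₀ (Real.rpow_pos_of_pos hn A).ne',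
      one_mul]
  calc (fun n : ℕ => BF10F f (β * n) r k (δ * n - c₀)) =O[atTop]
      (fun n : ℕ => (n:ℝ)^(-A) * 1) := heq.trans_isBigO hO2
    _ =O[atTop] (fun n : ℕ => (n:ℝ)^(-(k / 2 + r))) := by
        simp only [mul_one, hAdef]
        exact isBigO_refl _ _
end

section
/- (Fisher information for r in the gamma family with fixed mode; basis of the Jeffreys prior in equation (15).) Fix k > 0, m > 0 and λ > 0. For r with k/2 + r > 1, define ℓ(r) = log γ(λ; k/2 + r, (k/2 + r − 1)/m), the log of the Gamma density with shape α = k/2 + r and rate (α − 1)/m (so that the mode is at m). Then ℓ is twice differentiable in r, the second derivative does not depend on λ or m, and −ℓ''(r) = ψ₁(k/2 + r) − (k/2 + r − 2)/(k/2 + r − 1)², where ψ₁ denotes the trigamma function (the second derivative of log Γ). -/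
open Real MeasureTheory Filter

/-- Gamma density with shape `α` and rate `b`. -/
noncomputable def gammaPdf (α b lam : ℝ) : ℝ :=
  b ^ α * lam ^ (α - 1) * Real.exp (-b * lam) / Real.Gamma α

/-- Trigamma function: the second derivative of `log Γ` on `(0, ∞)`. -/
noncomputable def trigamma (x : ℝ) : ℝ :=
  deriv (deriv (fun y : ℝ => Real.log (Real.Gamma y))) x

open scoped ContDiff

private lemma analyticAt_deriv_of_analyticAt {f : ℝ → ℝ} {x : ℝ} (h : AnalyticAt ℝ f x) :
    AnalyticAt ℝ (deriv f) x := by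
  have h1 : AnalyticAt ℝ (fderiv ℝ f) x := h.fderiv
  have h2 : AnalyticAt ℝ (fun y => fderiv ℝ f y 1) x :=
    ((ContinuousLinearMap.apply ℝ ℝ (1 : ℝ)).analyticAt _).comp h1
  exact h2.congr (Filter.Eventually.of_forall fun y => fderiv_apply_one_eq_deriv)

private lemma analyticAt_logGamma {x : ℝ} (hx : 0 < x) :
    AnalyticAt ℝ (fun y : ℝ => Real.log (Real.Gamma y)) x := by
  have hUopen : IsOpen {z : ℂ | 0 < z.re} := isOpen_lt continuous_const Complex.continuous_re
  have hdiff : DifferentiableOn ℂ Complex.Gamma {z : ℂ | 0 < z.re} := by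
    intro z hz
    refine (Complex.differentiableAt_Gamma z fun m => ?_).differentiableWithinAt
    intro hzm
    have : z.re = -(m : ℝ) := by rw [hzm]; simp
    have hm : (0 : ℝ) ≤ (m : ℝ) := m.cast_nonneg
    have := hz
    simp only [Set.mem_setOf_eq] at this
    linarith [this.trans_eq ‹z.re = -(m : ℝ)›]
  have hC : AnalyticAt ℂ Complex.Gamma (x : ℂ) :=
    hdiff.analyticAt (hUopen.mem_nhds (by simpa using hx))
  have h2 : AnalyticAt ℝ (fun y : ℝ => (Complex.Gamma (y : ℂ)).re) x := by
    exact (Complex.reCLM.analyticAt _).comp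
      ((hC.restrictScalars).comp (Complex.ofRealCLM.analyticAt x))
  have hG : AnalyticAt ℝ Real.Gamma x := by
    refine h2.congr (Filter.Eventually.of_forall fun y => ?_)
    show (Complex.Gamma (y : ℂ)).re = Real.Gamma y
    rw [Complex.Gamma_ofReal, Complex.ofReal_re]
  have hlog : AnalyticAt ℝ Real.log (Real.Gamma x) :=
    ((Real.contDiffAt_log (n := ω)).2 (Real.Gamma_pos_of_pos hx).ne').analyticAt
  exact hlog.comp hG

/-- Fisher information for `r` in the gamma family with fixed mode `m`:
with `ℓ(r) = log γ(λ; k/2 + r, (k/2 + r − 1)/m)`, `ℓ` is twice differentiable on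
`{r | k/2 + r > 1}` and `−ℓ''(r) = ψ₁(k/2 + r) − (k/2 + r − 2)/(k/2 + r − 1)²`,
independent of `λ` and `m`. -/
theorem gamma_fisher_information (k m lam : ℝ) (hk : 0 < k) (hm : 0 < m) (hlam : 0 < lam) :
    ∃ ℓ' ℓ'' : ℝ → ℝ,
      (∀ r : ℝ, 1 < k / 2 + r →
        HasDerivAt (fun s : ℝ => Real.log (gammaPdf (k / 2 + s) ((k / 2 + s - 1) / m) lam))
          (ℓ' r) r) ∧
      (∀ r : ℝ, 1 < k / 2 + r → HasDerivAt ℓ' (ℓ'' r) r) ∧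
      (∀ r : ℝ, 1 < k / 2 + r →
        -ℓ'' r = trigamma (k / 2 + r) - (k / 2 + r - 2) / (k / 2 + r - 1) ^ 2) := by
  set ψ : ℝ → ℝ := deriv (fun y : ℝ => Real.log (Real.Gamma y)) with hψ
  refine ⟨fun r => Real.log ((k / 2 + r - 1) / m) + (k / 2 + r) / (k / 2 + r - 1)
      + Real.log lam - lam / m - ψ (k / 2 + r),
    fun r => 1 / (k / 2 + r - 1) - 1 / (k / 2 + r - 1) ^ 2 - trigamma (k / 2 + r),
    ?_, ?_, ?_⟩
  · -- first derivative
    intro r hr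
    have hα : 0 < k / 2 + r := lt_trans one_pos hr
    have hα1 : 0 < k / 2 + r - 1 := by linarith
    have h1 : HasDerivAt (fun s : ℝ => k / 2 + s) 1 r := (hasDerivAt_id r).const_add (k / 2)
    have hstep : HasDerivAt (fun s : ℝ => k / 2 + s - 1) 1 r := h1.sub_const 1
    have hb : HasDerivAt (fun s : ℝ => (k / 2 + s - 1) / m) (1 / m) r := hstep.div_const m
    have hbpos : 0 < (k / 2 + r - 1) / m := div_pos hα1 hm
    have hlogb : HasDerivAt (fun s : ℝ => Real.log ((k / 2 + s - 1) / m))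
        (1 / m / ((k / 2 + r - 1) / m)) r := hb.log hbpos.ne'
    have t1 : HasDerivAt (fun s : ℝ => (k / 2 + s) * Real.log ((k / 2 + s - 1) / m))
        (1 * Real.log ((k / 2 + r - 1) / m) + (k / 2 + r) * (1 / m / ((k / 2 + r - 1) / m))) r :=
      h1.mul hlogb
    have t2 : HasDerivAt (fun s : ℝ => (k / 2 + s - 1) * Real.log lam) (1 * Real.log lam) r :=
      hstep.mul_const _
    have t3 : HasDerivAt (fun s : ℝ => (k / 2 + s - 1) / m * lam) (1 / m * lam) r :=
      hb.mul_const lam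
    have hLGdiff : DifferentiableAt ℝ (fun y : ℝ => Real.log (Real.Gamma y)) (k / 2 + r) :=
      (analyticAt_logGamma hα).differentiableAt
    have t4 : HasDerivAt (fun s : ℝ => Real.log (Real.Gamma (k / 2 + s)))
        (ψ (k / 2 + r) * 1) r := by
      simpa [Function.comp_def] using (hLGdiff.hasDerivAt).comp r h1
    have G : HasDerivAt (fun s : ℝ => (k / 2 + s) * Real.log ((k / 2 + s - 1) / m)
        + (k / 2 + s - 1) * Real.log lam - (k / 2 + s - 1) / m * lam
        - Real.log (Real.Gamma (k / 2 + s)))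
        ((1 * Real.log ((k / 2 + r - 1) / m) + (k / 2 + r) * (1 / m / ((k / 2 + r - 1) / m)))
          + 1 * Real.log lam - 1 / m * lam - ψ (k / 2 + r) * 1) r :=
      ((t1.add t2).sub t3).sub t4
    have hev : (fun s : ℝ => Real.log (gammaPdf (k / 2 + s) ((k / 2 + s - 1) / m) lam))
        =ᶠ[nhds r] (fun s : ℝ => (k / 2 + s) * Real.log ((k / 2 + s - 1) / m)
        + (k / 2 + s - 1) * Real.log lam - (k / 2 + s - 1) / m * lam
        - Real.log (Real.Gamma (k / 2 + s))) := by
      have hopen : IsOpen {s : ℝ | 1 < k / 2 + s} :=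
        isOpen_lt continuous_const (by continuity)
      filter_upwards [hopen.mem_nhds hr] with s hs
      have hαs : (0 : ℝ) < k / 2 + s := lt_trans one_pos hs
      have hα1s : (0 : ℝ) < k / 2 + s - 1 := by simpa using sub_pos.mpr hs
      have hbs : (0 : ℝ) < (k / 2 + s - 1) / m := div_pos hα1s hm
      have hΓ : (0 : ℝ) < Real.Gamma (k / 2 + s) := Real.Gamma_pos_of_pos hαs
      rw [gammaPdf, Real.log_div (by positivity) hΓ.ne',
        Real.log_mul (by positivity) (Real.exp_pos _).ne',
        Real.log_mul (by positivity) (by positivity),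
        Real.log_rpow hbs, Real.log_rpow hlam, Real.log_exp]
      ring
    have := G.congr_of_eventuallyEq hev
    convert this using 1
    · rfl
    · rfl
    simp only [one_mul, mul_one]
    rw [div_div_div_cancel_right₀ hm.ne']
    ring
  · -- second derivative
    intro r hr
    have hα : 0 < k / 2 + r := lt_trans one_pos hr
    have hα1 : 0 < k / 2 + r - 1 := by linarith
    have h1 : HasDerivAt (fun s : ℝ => k / 2 + s) 1 r := (hasDerivAt_id r).const_add (k / 2)
    have hstep : HasDerivAt (fun s : ℝ => k / 2 + s - 1) 1 r := h1.sub_const 1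
    have hb : HasDerivAt (fun s : ℝ => (k / 2 + s - 1) / m) (1 / m) r := hstep.div_const m
    have hbpos : 0 < (k / 2 + r - 1) / m := div_pos hα1 hm
    have u1 : HasDerivAt (fun s : ℝ => Real.log ((k / 2 + s - 1) / m))
        (1 / m / ((k / 2 + r - 1) / m)) r := hb.log hbpos.ne'
    have u2 : HasDerivAt (fun s : ℝ => (k / 2 + s) / (k / 2 + s - 1))
        ((1 * (k / 2 + r - 1) - (k / 2 + r) * 1) / (k / 2 + r - 1) ^ 2) r :=
      h1.div hstep hα1.ne'
    have hψdiff : DifferentiableAt ℝ ψ (k / 2 + r) :=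
      (analyticAt_deriv_of_analyticAt (analyticAt_logGamma hα)).differentiableAt
    have u5 : HasDerivAt (fun s : ℝ => ψ (k / 2 + s)) (deriv ψ (k / 2 + r) * 1) r := by
      simpa [Function.comp_def] using (hψdiff.hasDerivAt).comp r h1
    have hderivψ : deriv ψ (k / 2 + r) = trigamma (k / 2 + r) := rfl
    have G : HasDerivAt (fun s : ℝ => Real.log ((k / 2 + s - 1) / m)
        + (k / 2 + s) / (k / 2 + s - 1) + Real.log lam - lam / m - ψ (k / 2 + s))
        (1 / m / ((k / 2 + r - 1) / m)
          + (1 * (k / 2 + r - 1) - (k / 2 + r) * 1) / (k / 2 + r - 1) ^ 2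
          + 0 - 0 - deriv ψ (k / 2 + r) * 1) r :=
      (((u1.add u2).add (hasDerivAt_const r (Real.log lam))).sub
        (hasDerivAt_const r (lam / m))).sub u5
    convert G using 1
    rw [hderivψ]
    field_simp
    ring
  · -- value of the second derivative
    intro r hr
    have hα1 : (0 : ℝ) < k / 2 + r - 1 := by linarith
    have hne : (k / 2 + r - 1) ≠ 0 := hα1.ne'
    have key : ∀ c : ℝ, c ≠ 0 → (c - 1) / c ^ 2 = 1 / c - 1 / c ^ 2 := by
      intro c hc
      rw [div_sub_div _ _ hc (pow_ne_zero 2 hc)]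
      rw [div_eq_div_iff (pow_ne_zero 2 hc) (mul_ne_zero hc (pow_ne_zero 2 hc))]
      ring
    have h2 : (k / 2 + r - 2) / (k / 2 + r - 1) ^ 2
        = 1 / (k / 2 + r - 1) - 1 / (k / 2 + r - 1) ^ 2 := by
      have hrw : k / 2 + r - 2 = (k / 2 + r - 1) - 1 := by ring
      rw [hrw]
      exact key _ hne
    rw [h2]
    ring
end
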